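/- Suppose p(s), q(s) are smooth with q nonvanishing and satisfy q(q'' + 2 p' q + 5 q' p + 6 p² q) + c₁ (q' + 2 p q)² − c₂ q³ = 0 for constants c₁, c₂. Let w, w̃ be linearly independent solutions of w'' + p w' + q w = 0 with Wronskian W ≠ 0 and w ≠ 0, and set z = w̃/w, g = w w'/W (as a function of z). Then g satisfies the third-order ODE (g' − g²)(g''' − 12 g g'' − 6 (g')² + 48 g² g' − 24 g⁴) + c₁ (g'' − 6 g g' + 4 g³)² + c₂ (g' − g²)³ = 0. -/

import Mathlib

set_option maxHeartbeats 4000000 in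
/-- if the coefficients `p, q` of the linear equation
`w'' + p w' + q w = 0` satisfy the constraint
`q(q'' + 2p'q + 5q'p + 6p²q) + c₁(q' + 2pq)² − c₂ q³ = 0`, then
`g = w w'/W`, as a function of `z = w̃/w` (so `d/dz = (w²/W)·d/ds`),
satisfies the third-order ODE
`(g'−g²)(g'''−12gg''−6(g')²+48g²g'−24g⁴) + c₁(g''−6gg'+4g³)² + c₂(g'−g²)³ = 0`. -/
theorem abel_linearisation_third_order_ode
    (c₁ c₂ : ℝ) (I : Set ℝ) (hI : IsOpen I)
    (p p' q q' q'' w w' w'' wt wt' wt'' g dg g1 dg1 g2 dg2 g3 : ℝ → ℝ)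
    (hq0 : ∀ s ∈ I, q s ≠ 0)
    (hp : ∀ s ∈ I, HasDerivAt p (p' s) s)
    (hq : ∀ s ∈ I, HasDerivAt q (q' s) s)
    (hq' : ∀ s ∈ I, HasDerivAt q' (q'' s) s)
    (hw : ∀ s ∈ I, HasDerivAt w (w' s) s)
    (hw' : ∀ s ∈ I, HasDerivAt w' (w'' s) s)
    (hwt : ∀ s ∈ I, HasDerivAt wt (wt' s) s)
    (hwt' : ∀ s ∈ I, HasDerivAt wt' (wt'' s) s)
    (hODEw : ∀ s ∈ I, w'' s + p s * w' s + q s * w s = 0)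
    (hODEwt : ∀ s ∈ I, wt'' s + p s * wt' s + q s * wt s = 0)
    (hw0 : ∀ s ∈ I, w s ≠ 0)
    (hW0 : ∀ s ∈ I, wt' s * w s - w' s * wt s ≠ 0)
    (hconstraint : ∀ s ∈ I,
      q s * (q'' s + 2 * p' s * q s + 5 * q' s * p s + 6 * (p s) ^ 2 * q s)
        + c₁ * (q' s + 2 * p s * q s) ^ 2 - c₂ * (q s) ^ 3 = 0)
    (hg : ∀ s ∈ I, g s = w s * w' s / (wt' s * w s - w' s * wt s))
    (hdg : ∀ s ∈ I, HasDerivAt g (dg s) s)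
    (hg1 : ∀ s ∈ I, g1 s = (w s) ^ 2 / (wt' s * w s - w' s * wt s) * dg s)
    (hdg1 : ∀ s ∈ I, HasDerivAt g1 (dg1 s) s)
    (hg2 : ∀ s ∈ I, g2 s = (w s) ^ 2 / (wt' s * w s - w' s * wt s) * dg1 s)
    (hdg2 : ∀ s ∈ I, HasDerivAt g2 (dg2 s) s)
    (hg3 : ∀ s ∈ I, g3 s = (w s) ^ 2 / (wt' s * w s - w' s * wt s) * dg2 s) :
    ∀ s ∈ I,
      (g1 s - (g s) ^ 2) *
          (g3 s - 12 * g s * g2 s - 6 * (g1 s) ^ 2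
            + 48 * (g s) ^ 2 * g1 s - 24 * (g s) ^ 4)
        + c₁ * (g2 s - 6 * g s * g1 s + 4 * (g s) ^ 3) ^ 2
        + c₂ * (g1 s - (g s) ^ 2) ^ 3 = 0 := by

  -- abbreviation: W t = wt' t * w t - w' t * wt t
  -- Step 0: derivative of W on I is -p * W
  have hWd : ∀ t ∈ I, HasDerivAt (fun u => wt' u * w u - w' u * wt u)
      (-(p t) * (wt' t * w t - w' t * wt t)) t := by
    intro t ht
    have h := ((hwt' t ht).mul (hw t ht)).sub ((hw' t ht).mul (hwt t ht))
    refine h.congr_deriv (Eq.symm ?_)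
    have e1 := hODEw t ht
    have e2 := hODEwt t ht
    linear_combination (wt t) * e1 - (w t) * e2
  -- Step 1: formula for dg on I
  have hdgf : ∀ t ∈ I, dg t = (w' t ^ 2 - q t * w t ^ 2) / (wt' t * w t - w' t * wt t) := by
    intro t ht
    have hG : HasDerivAt (fun u => w u * w' u / (wt' u * w u - w' u * wt u))
        (((w' t * w' t + w t * w'' t) * (wt' t * w t - w' t * wt t)
          - w t * w' t * (-(p t) * (wt' t * w t - w' t * wt t)))
          / (wt' t * w t - w' t * wt t) ^ 2) t :=
      ((hw t ht).mul (hw' t ht)).div (hWd t ht) (hW0 t ht)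
    have hEq : g =ᶠ[nhds t] (fun u => w u * w' u / (wt' u * w u - w' u * wt u)) :=
      Filter.eventuallyEq_of_mem (hI.mem_nhds ht) (fun u hu => hg u hu)
    have huniq := (hdg t ht).unique (hG.congr_of_eventuallyEq hEq)
    have hw2 : w'' t = -(p t * w' t + q t * w t) := by linarith [hODEw t ht]
    have hW := hW0 t ht
    rw [huniq, hw2]
    field_simp
    ring
  -- Step 2: formula for g1 on I
  have hg1f : ∀ t ∈ I, g1 t = (w t ^ 2 * w' t ^ 2 - q t * w t ^ 4)
      / (wt' t * w t - w' t * wt t) ^ 2 := by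
    intro t ht
    rw [hg1 t ht, hdgf t ht]
    have hW := hW0 t ht
    field_simp
  -- Step 3: formula for dg1 on I
  have hdg1f : ∀ t ∈ I, dg1 t =
      (2 * w t * w' t ^ 3 - 6 * q t * w t ^ 3 * w' t
        - (q' t + 2 * p t * q t) * w t ^ 4) / (wt' t * w t - w' t * wt t) ^ 2 := by
    intro t ht
    have hN : HasDerivAt (fun u => w u ^ 2 * w' u ^ 2 - q u * w u ^ 4)
        ((2 * w t ^ 1 * w' t) * w' t ^ 2 + w t ^ 2 * (2 * w' t ^ 1 * w'' t)
          - (q' t * w t ^ 4 + q t * (4 * w t ^ 3 * w' t))) t :=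
      (((hw t ht).pow 2).mul ((hw' t ht).pow 2)).sub
        ((hq t ht).mul ((hw t ht).pow 4))
    have hD : HasDerivAt (fun u => (wt' u * w u - w' u * wt u) ^ 2)
        (2 * (wt' t * w t - w' t * wt t) ^ 1
          * (-(p t) * (wt' t * w t - w' t * wt t))) t := (hWd t ht).pow 2
    have hG := hN.div hD (pow_ne_zero 2 (hW0 t ht))
    have hEq : g1 =ᶠ[nhds t] (fun u => (w u ^ 2 * w' u ^ 2 - q u * w u ^ 4)
        / (wt' u * w u - w' u * wt u) ^ 2) :=
      Filter.eventuallyEq_of_mem (hI.mem_nhds ht) (fun u hu => hg1f u hu)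
    have huniq := (hdg1 t ht).unique (hG.congr_of_eventuallyEq hEq)
    have hw2 : w'' t = -(p t * w' t + q t * w t) := by linarith [hODEw t ht]
    have hW := hW0 t ht
    rw [huniq, hw2]
    field_simp
    ring
  -- Step 4: formula for g2 on I
  have hg2f : ∀ t ∈ I, g2 t = (2 * w t ^ 3 * w' t ^ 3 - 6 * q t * w t ^ 5 * w' t
      - (q' t + 2 * p t * q t) * w t ^ 6) / (wt' t * w t - w' t * wt t) ^ 3 := by
    intro t ht
    rw [hg2 t ht, hdg1f t ht]
    have hW := hW0 t ht
    field_simp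
  -- Step 5: formula for dg2 on I
  have hdg2f : ∀ t ∈ I, dg2 t =
      (6 * w t ^ 2 * w' t ^ 4 - 36 * q t * w t ^ 4 * w' t ^ 2
        - 12 * (q' t + 2 * p t * q t) * w t ^ 5 * w' t
        + (6 * q t ^ 2 - q'' t - 2 * p' t * q t - 5 * p t * q' t - 6 * p t ^ 2 * q t)
          * w t ^ 6) / (wt' t * w t - w' t * wt t) ^ 3 := by
    intro t ht
    have hc : HasDerivAt (fun u => q' u + 2 * p u * q u)
        (q'' t + (2 * p' t * q t + 2 * p t * q' t)) t := by
      have := (hq' t ht).add ((((hp t ht).const_mul 2)).mul (hq t ht))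
      exact this
    have hN : HasDerivAt
        (fun u => 2 * w u ^ 3 * w' u ^ 3 - 6 * q u * w u ^ 5 * w' u
          - (q' u + 2 * p u * q u) * w u ^ 6)
        (((2 * (3 * w t ^ 2 * w' t)) * w' t ^ 3 + 2 * w t ^ 3 * (3 * w' t ^ 2 * w'' t))
          - ((6 * q' t * w t ^ 5 + 6 * q t * (5 * w t ^ 4 * w' t)) * w' t
              + 6 * q t * w t ^ 5 * w'' t)
          - ((q'' t + (2 * p' t * q t + 2 * p t * q' t)) * w t ^ 6
              + (q' t + 2 * p t * q t) * (6 * w t ^ 5 * w' t))) t := by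
      have h1 : HasDerivAt (fun u => 2 * w u ^ 3 * w' u ^ 3)
          ((2 * (3 * w t ^ 2 * w' t)) * w' t ^ 3 + 2 * w t ^ 3 * (3 * w' t ^ 2 * w'' t)) t := by
        have := (((hw t ht).pow 3).const_mul 2).mul ((hw' t ht).pow 3)
        refine this.congr_deriv ?_
        simp only [Pi.pow_apply, Pi.mul_apply]
        norm_num
      have h2 : HasDerivAt (fun u => 6 * q u * w u ^ 5 * w' u)
          ((6 * q' t * w t ^ 5 + 6 * q t * (5 * w t ^ 4 * w' t)) * w' t
            + 6 * q t * w t ^ 5 * w'' t) t := by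
        have := ((((hq t ht).const_mul 6)).mul ((hw t ht).pow 5)).mul (hw' t ht)
        refine this.congr_deriv ?_
        simp only [Pi.pow_apply, Pi.mul_apply]
        norm_num
      have h3 : HasDerivAt (fun u => (q' u + 2 * p u * q u) * w u ^ 6)
          ((q'' t + (2 * p' t * q t + 2 * p t * q' t)) * w t ^ 6
            + (q' t + 2 * p t * q t) * (6 * w t ^ 5 * w' t)) t :=
        hc.mul ((hw t ht).pow 6)
      exact (h1.sub h2).sub h3
    have hD : HasDerivAt (fun u => (wt' u * w u - w' u * wt u) ^ 3)
        (3 * (wt' t * w t - w' t * wt t) ^ 2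
          * (-(p t) * (wt' t * w t - w' t * wt t))) t := (hWd t ht).pow 3
    have hG := hN.div hD (pow_ne_zero 3 (hW0 t ht))
    have hEq : g2 =ᶠ[nhds t] (fun u => (2 * w u ^ 3 * w' u ^ 3 - 6 * q u * w u ^ 5 * w' u
        - (q' u + 2 * p u * q u) * w u ^ 6) / (wt' u * w u - w' u * wt u) ^ 3) :=
      Filter.eventuallyEq_of_mem (hI.mem_nhds ht) (fun u hu => hg2f u hu)
    have huniq := (hdg2 t ht).unique (hG.congr_of_eventuallyEq hEq)
    have hw2 : w'' t = -(p t * w' t + q t * w t) := by linarith [hODEw t ht]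
    have hW := hW0 t ht
    rw [huniq, hw2]
    field_simp
    ring
  -- Step 6: formula for g3 on I
  have hg3f : ∀ t ∈ I, g3 t =
      (6 * w t ^ 4 * w' t ^ 4 - 36 * q t * w t ^ 6 * w' t ^ 2
        - 12 * (q' t + 2 * p t * q t) * w t ^ 7 * w' t
        + (6 * q t ^ 2 - q'' t - 2 * p' t * q t - 5 * p t * q' t - 6 * p t ^ 2 * q t)
          * w t ^ 8) / (wt' t * w t - w' t * wt t) ^ 4 := by
    intro t ht
    rw [hg3 t ht, hdg2f t ht]
    have hW := hW0 t ht
    field_simp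
  -- Final: plug everything in
  intro s hs
  have hc := hconstraint s hs
  have hW := hW0 s hs
  have main : (g1 s - (g s) ^ 2) *
          (g3 s - 12 * g s * g2 s - 6 * (g1 s) ^ 2
            + 48 * (g s) ^ 2 * g1 s - 24 * (g s) ^ 4)
        + c₁ * (g2 s - 6 * g s * g1 s + 4 * (g s) ^ 3) ^ 2
        + c₂ * (g1 s - (g s) ^ 2) ^ 3
      = (w s) ^ 12 / (wt' s * w s - w' s * wt s) ^ 6 *
        (q s * (q'' s + 2 * p' s * q s + 5 * q' s * p s + 6 * (p s) ^ 2 * q s)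
          + c₁ * (q' s + 2 * p s * q s) ^ 2 - c₂ * (q s) ^ 3) := by
    rw [hg s hs, hg1f s hs, hg2f s hs, hg3f s hs]
    field_simp
    ring
  rw [main, hc, mul_zero]
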